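/- The intersection of the Mandelbric M³ with the real axis is exactly the interval [−2/(3√3), 2/(3√3)]; that is, for a real number c, c ∈ M³ if and only if −2/(3√3) ≤ c ≤ 2/(3√3). -/

import Mathlib

private lemma sqrt3_pos : (0:ℝ) < Real.sqrt 3 := Real.sqrt_pos.mpr (by norm_num)

private lemma sqrt3_sq : Real.sqrt 3 ^ 2 = 3 := Real.sq_sqrt (by norm_num)

private lemma real_iter (c : ℝ) (m : ℕ) :
    (fun z : ℂ => z ^ 3 + (c : ℂ))^[m] 0 = (((fun x : ℝ => x ^ 3 + c)^[m] 0 : ℝ) : ℂ) := by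
  induction m with
  | zero => simp
  | succ n ih =>
    rw [Function.iterate_succ_apply', Function.iterate_succ_apply', ih]
    push_cast
    ring

private lemma iter_neg (c : ℝ) (m : ℕ) :
    (fun x : ℝ => x ^ 3 + c)^[m] 0 = -((fun x : ℝ => x ^ 3 + (-c))^[m] 0) := by
  induction m with
  | zero => simp
  | succ n ih =>
    rw [Function.iterate_succ_apply', Function.iterate_succ_apply', ih]
    ring

private lemma key (x : ℝ) (hx : 0 ≤ x) : x ≤ x ^ 3 + 2 / (3 * Real.sqrt 3) := by
  have hs := sqrt3_pos
  have hsq := sqrt3_sq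
  rw [← sub_nonneg]
  have h : (Real.sqrt 3 * x - 1) ^ 2 * (Real.sqrt 3 * x + 2)
      = 3 * Real.sqrt 3 * (x ^ 3 - x) + 2 := by
    linear_combination (Real.sqrt 3 * x ^ 3) * hsq
  have h2 : x ^ 3 + 2 / (3 * Real.sqrt 3) - x
      = ((Real.sqrt 3 * x - 1) ^ 2 * (Real.sqrt 3 * x + 2)) / (3 * Real.sqrt 3) := by
    rw [h]
    field_simp
    ring
  rw [h2]
  apply div_nonneg
  · apply mul_nonneg (sq_nonneg _)
    nlinarith [mul_nonneg hs.le hx]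
  · positivity

private lemma iter_grow (c : ℝ) (hc : 2 / (3 * Real.sqrt 3) < c) (m : ℕ) :
    (m : ℝ) * (c - 2 / (3 * Real.sqrt 3)) ≤ (fun x : ℝ => x ^ 3 + c)^[m] 0 := by
  induction m with
  | zero => simp
  | succ n ih =>
    have hε : (0:ℝ) ≤ c - 2 / (3 * Real.sqrt 3) := by linarith
    have hy : (0:ℝ) ≤ (fun x : ℝ => x ^ 3 + c)^[n] 0 := by
      have : (0:ℝ) ≤ (n : ℝ) * (c - 2 / (3 * Real.sqrt 3)) := by positivity
      linarith
    rw [Function.iterate_succ_apply']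
    have hk := key _ hy
    push_cast
    nlinarith [hk, ih]

private lemma iter_bound (c : ℝ) (hc : |c| ≤ 2 / (3 * Real.sqrt 3)) (m : ℕ) :
    |(fun x : ℝ => x ^ 3 + c)^[m] 0| ≤ Real.sqrt 3 / 3 := by
  have hs := sqrt3_pos
  have hsq := sqrt3_sq
  induction m with
  | zero => simpa using by positivity
  | succ n ih =>
    rw [Function.iterate_succ_apply']
    set y := (fun x : ℝ => x ^ 3 + c)^[n] 0 with hy
    have h1 : |y ^ 3 + c| ≤ |y| ^ 3 + |c| := by
      calc |y ^ 3 + c| ≤ |y ^ 3| + |c| := abs_add_le _ _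
        _ = |y| ^ 3 + |c| := by rw [abs_pow]
    have h2 : |y| ^ 3 ≤ (Real.sqrt 3 / 3) ^ 3 := pow_le_pow_left₀ (abs_nonneg _) ih 3
    have h3 : (Real.sqrt 3 / 3) ^ 3 + 2 / (3 * Real.sqrt 3) = Real.sqrt 3 / 3 := by
      field_simp
      nlinarith [hsq, hs]
    calc |y ^ 3 + c| ≤ |y| ^ 3 + |c| := h1
      _ ≤ (Real.sqrt 3 / 3) ^ 3 + 2 / (3 * Real.sqrt 3) := by linarith
      _ = Real.sqrt 3 / 3 := h3

theorem mandelbric_inter_real (c : ℝ) :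
    (∃ M : ℝ, ∀ m : ℕ, 1 ≤ m →
        ‖(fun z : ℂ => z ^ 3 + (c : ℂ))^[m] 0‖ ≤ M) ↔
      -2 / (3 * Real.sqrt 3) ≤ c ∧ c ≤ 2 / (3 * Real.sqrt 3) := by
  have hs := sqrt3_pos
  constructor
  · rintro ⟨M, hM⟩
    by_contra h
    push_neg at h
    -- derive 2/(3√3) < |c|
    have hb : 2 / (3 * Real.sqrt 3) < |c| := by
      rcases le_or_gt (-2 / (3 * Real.sqrt 3)) c with h1 | h1
      · have h2 := h h1
        calc 2 / (3 * Real.sqrt 3) < c := h2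
          _ ≤ |c| := le_abs_self c
      · have : c < 0 := by
          have h4 : (0:ℝ) < 2 / (3 * Real.sqrt 3) := by positivity
          have : -2 / (3 * Real.sqrt 3) < 0 := by rw [neg_div]; linarith
          linarith
        rw [abs_of_neg this]
        rw [neg_div] at h1
        linarith
    set ε := |c| - 2 / (3 * Real.sqrt 3) with hε
    have hεpos : 0 < ε := by simp [hε]; linarith
    -- |iterate of c| ≥ iterate of |c|
    have habs : ∀ m : ℕ, (fun x : ℝ => x ^ 3 + |c|)^[m] 0 ≤ |(fun x : ℝ => x ^ 3 + c)^[m] 0| := by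
      intro m
      rcases le_or_gt 0 c with h0 | h0
      · rw [abs_of_nonneg h0]
        exact le_abs_self _
      · rw [abs_of_neg h0]
        rw [iter_neg c m, abs_neg]
        have : -c = -c := rfl
        exact le_abs_self _
    obtain ⟨n, hn⟩ := exists_nat_gt (M / ε)
    have hMn : M < (n : ℝ) * ε := by
      rw [div_lt_iff₀ hεpos] at hn
      linarith
    have hgrow := iter_grow |c| hb (n + 1)
    have hub := hM (n + 1) (by omega)
    rw [real_iter, Complex.norm_real, Real.norm_eq_abs] at hub
    have hchain : ((n : ℝ) + 1) * ε ≤ M := by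
      push_cast at hgrow
      calc ((n : ℝ) + 1) * ε ≤ (fun x : ℝ => x ^ 3 + |c|)^[n + 1] 0 := hgrow
        _ ≤ |(fun x : ℝ => x ^ 3 + c)^[n + 1] 0| := habs (n + 1)
        _ ≤ M := hub
    nlinarith [hMn, hchain, hεpos]
  · rintro ⟨h1, h2⟩
    refine ⟨Real.sqrt 3 / 3, fun m _ => ?_⟩
    rw [real_iter, Complex.norm_real, Real.norm_eq_abs]
    apply iter_bound
    rw [abs_le]
    constructor
    · rw [neg_div] at h1; linarith
    · exact h2
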